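/- If f_i : G_i → G'_i are injective identity-preserving set maps, then the induced homomorphism Φ_Γ : (K_Γ, d_nl) → (K'_Γ, d_nl) is an isometric embedding with respect to the normal length metrics. -/

import Mathlib

open Monoid
open scoped commutatorElement

namespace GPaper

variable {ι : Type*}

/-- The relator subgroup of the graph product: normal closure of commutators of
elements of vertex groups at adjacent vertices. -/
def Rels (Γ : SimpleGraph ι) (G : ι → Type*) [∀ i, Group (G i)] : Subgroup (Monoid.CoprodI G) :=
  Subgroup.normalClosure
    { x | ∃ (i j : ι) (g : G i) (h : G j), Γ.Adj i j ∧
          x = ⁅Monoid.CoprodI.of g, Monoid.CoprodI.of h⁆ }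

instance (Γ : SimpleGraph ι) (G : ι → Type*) [∀ i, Group (G i)] : (Rels Γ G).Normal :=
  Subgroup.normalClosure_normal

/-- The graph product of the groups `G i` over the simplicial graph `Γ`. -/
abbrev GP (Γ : SimpleGraph ι) (G : ι → Type*) [∀ i, Group (G i)] :=
  Monoid.CoprodI G ⧸ Rels Γ G

/-- The canonical inclusion of a vertex group into the graph product. -/
def of (Γ : SimpleGraph ι) (G : ι → Type*) [∀ i, Group (G i)] (i : ι) : G i →* GP Γ G :=
  (QuotientGroup.mk' (Rels Γ G)).comp Monoid.CoprodI.of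

/-- The canonical homomorphism from the graph product to the direct product. -/
def proj [DecidableEq ι] (Γ : SimpleGraph ι) (G : ι → Type*) [∀ i, Group (G i)] :
    GP Γ G →* (∀ i, G i) :=
  QuotientGroup.lift (Rels Γ G) (Monoid.CoprodI.lift (fun i => MonoidHom.mulSingle G i)) (by
    intro x hx
    refine Subgroup.normalClosure_le_normal ?_ hx
    rintro y ⟨i, j, g, h, hadj, rfl⟩
    have hij : i ≠ j := hadj.ne
    simp only [SetLike.mem_coe, MonoidHom.mem_ker, map_commutatorElement,
      Monoid.CoprodI.lift_of]
    rw [commutatorElement_eq_one_iff_commute]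
    exact Pi.mulSingle_commute hij g h)

/-- The canonical epimorphism `G_Γ → G_Γ'` when `Γ'` is obtained from `Γ` by adding edges. -/
def mapGraph (Γ Γ' : SimpleGraph ι) (hΓ : Γ ≤ Γ') (G : ι → Type*) [∀ i, Group (G i)] :
    GP Γ G →* GP Γ' G :=
  QuotientGroup.lift (Rels Γ G) (QuotientGroup.mk' (Rels Γ' G)) (by
    intro x hx
    rw [QuotientGroup.ker_mk']
    refine Subgroup.normalClosure_le_normal ?_ hx
    rintro y ⟨i, j, g, h, hadj, rfl⟩
    exact Subgroup.subset_normalClosure ⟨i, j, g, h, hΓ hadj, rfl⟩)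

/-- The element of the graph product represented by a word (list of syllables). -/
def wordProd (Γ : SimpleGraph ι) (G : ι → Type*) [∀ i, Group (G i)]
    (w : List (Σ i, G i)) : GP Γ G :=
  (w.map fun s => of Γ G s.1 s.2).prod

/-- The image of a word in the direct product of the vertex groups. -/
def piProd [DecidableEq ι] (G : ι → Type*) [∀ i, Group (G i)]
    (w : List (Σ i, G i)) : ∀ i, G i :=
  (w.map fun s => Pi.mulSingle s.1 s.2).prod

/-- The ordered product of those syllables of a word that belong to `G i`. -/
def sylProd [DecidableEq ι] (G : ι → Type*) [∀ i, Group (G i)]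
    (w : List (Σ i, G i)) (i : ι) : G i :=
  (w.filterMap fun s => if h : s.1 = i then some (cast (congrArg G h) s.2) else none).prod

/-- The normal (syllable) length of an element of a graph product:
the minimal number of syllables in a word representing it. -/
noncomputable def nl (Γ : SimpleGraph ι) (G : ι → Type*) [∀ i, Group (G i)]
    (g : GP Γ G) : ℕ :=
  sInf { n | ∃ w : List (Σ i, G i), wordProd Γ G w = g ∧ w.length = n }

section Phi

open scoped Classical

variable [DecidableEq ι] {G G' : ι → Type*} [∀ i, Group (G i)] [∀ i, Group (G' i)]

/-- One step of the recursive construction of `Φ`: the new syllable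
`f(π(w))⁻¹ · f(π(w)s)` (dropped if trivial), where `g = π(w)`. -/
noncomputable def phiStep (f : ∀ i, G i → G' i) (g : ∀ i, G i) (s : Σ i, G i) : List (Σ i, G' i) :=
  if (f s.1 (g s.1))⁻¹ * f s.1 (g s.1 * s.2) = 1 then []
  else [⟨s.1, (f s.1 (g s.1))⁻¹ * f s.1 (g s.1 * s.2)⟩]

/-- Auxiliary recursion: process the word left to right, carrying the
image `g` of the prefix in the direct product. -/
noncomputable def phiAux (f : ∀ i, G i → G' i) : (∀ i, G i) → List (Σ i, G i) → List (Σ i, G' i)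
  | _, [] => []
  | g, s :: w => phiStep f g s ++ phiAux f (g * Pi.mulSingle s.1 s.2) w

/-- The word map `Φ : S* → S'*` induced by the set maps `f i : G i → G' i`. -/
noncomputable def phiWord (f : ∀ i, G i → G' i) (w : List (Σ i, G i)) : List (Σ i, G' i) :=
  phiAux f 1 w

end Phi


section Stmt9Aux

/-! ### A "cocycle" group used to build the induced homomorphism -/

set_option linter.unusedSectionVars false

/-- Pairs `(a, φ)` with `a : A` and `φ : A → T`, with multiplication
`(a, φ) * (b, ψ) = (a * b, fun x => φ x * ψ (x * a))`. -/
structure Wr (A T : Type*) where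
  fst : A
  snd : A → T

namespace Wr

variable {A T : Type*} [Group A] [Group T]

instance : Mul (Wr A T) :=
  ⟨fun p q => ⟨p.fst * q.fst, fun x => p.snd x * q.snd (x * p.fst)⟩⟩

instance : One (Wr A T) := ⟨⟨1, fun _ => 1⟩⟩

instance : Inv (Wr A T) :=
  ⟨fun p => ⟨p.fst⁻¹, fun x => (p.snd (x * p.fst⁻¹))⁻¹⟩⟩

@[simp] lemma mul_fst (p q : Wr A T) : (p * q).fst = p.fst * q.fst := rfl
@[simp] lemma mul_snd (p q : Wr A T) (x : A) :
    (p * q).snd x = p.snd x * q.snd (x * p.fst) := rfl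
@[simp] lemma one_fst : (1 : Wr A T).fst = 1 := rfl
@[simp] lemma one_snd (x : A) : (1 : Wr A T).snd x = 1 := rfl

protected lemma ext {p q : Wr A T} (h1 : p.fst = q.fst) (h2 : ∀ x, p.snd x = q.snd x) :
    p = q := by
  cases p; cases q
  simp only [mk.injEq]
  exact ⟨h1, funext h2⟩

instance : Group (Wr A T) where
  mul_assoc p q r := Wr.ext (mul_assoc _ _ _) (fun x => by
    simp [mul_assoc])
  one_mul p := Wr.ext (one_mul _) (fun x => by simp)
  mul_one p := Wr.ext (mul_one _) (fun x => by simp)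
  inv_mul_cancel p := Wr.ext (inv_mul_cancel _) (fun x => by
    show (p.snd (x * p.fst⁻¹))⁻¹ * p.snd (x * p.fst⁻¹) = 1
    simp)

end Wr

open scoped Classical

variable {G G' : ι → Type*} [∀ i, Group (G i)] [∀ i, Group (G' i)]

section WordLemmas

variable (Γ : SimpleGraph ι)

@[simp] lemma wordProd_nil : wordProd Γ G [] = 1 := rfl

lemma wordProd_cons (s : Σ i, G i) (w : List (Σ i, G i)) :
    wordProd Γ G (s :: w) = of Γ G s.1 s.2 * wordProd Γ G w := by
  simp [wordProd]

lemma wordProd_append (u v : List (Σ i, G i)) :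
    wordProd Γ G (u ++ v) = wordProd Γ G u * wordProd Γ G v := by
  simp [wordProd]

lemma of_adj_commute {i j : ι} (hadj : Γ.Adj i j) (a : G i) (b : G j) :
    Commute (of Γ G i a) (of Γ G j b) := by
  rw [← commutatorElement_eq_one_iff_commute]
  have : (⁅Monoid.CoprodI.of a, Monoid.CoprodI.of b⁆ : Monoid.CoprodI G) ∈ Rels Γ G :=
    Subgroup.subset_normalClosure ⟨i, j, a, b, hadj, rfl⟩
  show (QuotientGroup.mk' (Rels Γ G)).comp Monoid.CoprodI.of a *
      (QuotientGroup.mk' (Rels Γ G)).comp Monoid.CoprodI.of b * _ * _ = 1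
  have h2 : (QuotientGroup.mk' (Rels Γ G)) ⁅Monoid.CoprodI.of a, Monoid.CoprodI.of b⁆ = 1 :=
    (QuotientGroup.eq_one_iff _).2 this
  simpa [commutatorElement_def, of] using h2

lemma exists_word (z : GP Γ G) : ∃ w : List (Σ i, G i), wordProd Γ G w = z := by
  induction z using QuotientGroup.induction_on with
  | H m =>
    induction m using Monoid.CoprodI.induction_on with
    | one => exact ⟨[], rfl⟩
    | of i a => exact ⟨[⟨i, a⟩], by simp [wordProd, of]⟩
    | mul x y hx hy =>
      obtain ⟨u, hu⟩ := hx
      obtain ⟨v, hv⟩ := hy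
      exact ⟨u ++ v, by rw [wordProd_append, hu, hv]; rfl⟩

variable [DecidableEq ι]

@[simp] lemma piProd_nil : piProd G ([] : List (Σ i, G i)) = 1 := rfl

lemma piProd_cons (s : Σ i, G i) (w : List (Σ i, G i)) :
    piProd G (s :: w) = Pi.mulSingle s.1 s.2 * piProd G w := by
  simp [piProd]

lemma piProd_append (u v : List (Σ i, G i)) :
    piProd G (u ++ v) = piProd G u * piProd G v := by
  simp [piProd]

@[simp] lemma proj_of (i : ι) (a : G i) : proj Γ G (of Γ G i a) = Pi.mulSingle i a := by
  simp [proj, of]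

lemma proj_wordProd (w : List (Σ i, G i)) :
    proj Γ G (wordProd Γ G w) = piProd G w := by
  induction w with
  | nil => simp
  | cons s w ih => rw [wordProd_cons, map_mul, ih, proj_of, piProd_cons]

end WordLemmas

section Theta

variable [DecidableEq ι] (Γ : SimpleGraph ι) (T : Type*) [Group T]
  (e : ∀ i, G' i →* T) (f : ∀ i, G i → G' i)

/-- The vertex homomorphism into the cocycle group. -/
noncomputable def thetaVertex (i : ι) : G i →* Wr (∀ i, G i) T where
  toFun a := ⟨Pi.mulSingle i a, fun x => e i ((f i (x i))⁻¹ * f i (x i * a))⟩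
  map_one' := by
    refine Wr.ext (by simp) (fun x => ?_)
    simp
  map_mul' a b := by
    refine Wr.ext (by simp [Pi.mulSingle_mul]) (fun x => ?_)
    simp only [Wr.mul_snd, ← map_mul, Pi.mul_apply, Pi.mulSingle_eq_same]
    congr 1
    group

variable (hcomm : ∀ ⦃i j : ι⦄, Γ.Adj i j → ∀ (a : G' i) (b : G' j), Commute (e i a) (e j b))

/-- The cocycle homomorphism out of the graph product. -/
noncomputable def theta : GP Γ G →* Wr (∀ i, G i) T :=
  QuotientGroup.lift (Rels Γ G) (Monoid.CoprodI.lift (fun i => thetaVertex T e f i)) (by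
    intro x hx
    refine Subgroup.normalClosure_le_normal ?_ hx
    rintro y ⟨i, j, g, h, hadj, rfl⟩
    have hij : i ≠ j := hadj.ne
    simp only [SetLike.mem_coe, MonoidHom.mem_ker, map_commutatorElement,
      Monoid.CoprodI.lift_of]
    rw [commutatorElement_eq_one_iff_commute]
    refine Wr.ext ?_ (fun x => ?_)
    · exact (Pi.mulSingle_commute hij g h).eq
    · simp only [Wr.mul_snd, thetaVertex, MonoidHom.coe_mk, OneHom.coe_mk,
        Pi.mul_apply, Pi.mulSingle_eq_same, Pi.mulSingle_eq_of_ne hij,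
        Pi.mulSingle_eq_of_ne hij.symm]
      simp only [mul_one]
      exact (hcomm hadj _ _).eq)

@[simp] lemma theta_of (i : ι) (a : G i) :
    theta Γ T e f hcomm (of Γ G i a) = thetaVertex T e f i a := by
  simp [theta, of]

end Theta

section PhiLemmas

variable [DecidableEq ι] (Γ : SimpleGraph ι) (f : ∀ i, G i → G' i)

lemma phiAux_nil (g : ∀ i, G i) : phiAux f g [] = [] := by
  rw [phiAux]

lemma phiAux_cons (g : ∀ i, G i) (s : Σ i, G i) (w : List (Σ i, G i)) :
    phiAux f g (s :: w) = phiStep f g s ++ phiAux f (g * Pi.mulSingle s.1 s.2) w := by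
  rw [phiAux]

lemma phiStep_length_le (g : ∀ i, G i) (s : Σ i, G i) : (phiStep f g s).length ≤ 1 := by
  unfold phiStep; split <;> simp

lemma phiAux_length_le (g : ∀ i, G i) (w : List (Σ i, G i)) :
    (phiAux f g w).length ≤ w.length := by
  induction w generalizing g with
  | nil => simp [phiAux_nil]
  | cons s w ih =>
    rw [phiAux_cons]
    have h1 := phiStep_length_le f g s
    have h2 := ih (g * Pi.mulSingle s.1 s.2)
    simp only [List.length_append, List.length_cons]
    omega

lemma phiAux_append (g : ∀ i, G i) (u v : List (Σ i, G i)) :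
    phiAux f g (u ++ v) = phiAux f g u ++ phiAux f (g * piProd G u) v := by
  induction u generalizing g with
  | nil => simp [phiAux_nil]
  | cons s u ih =>
    simp only [List.cons_append, phiAux_cons, ih, piProd_cons, List.append_assoc, mul_assoc]

lemma eprod_phiStep {T : Type*} [Group T] (e : ∀ i, G' i →* T) (g : ∀ i, G i) (s : Σ i, G i) :
    ((phiStep f g s).map fun t => e t.1 t.2).prod =
      e s.1 ((f s.1 (g s.1))⁻¹ * f s.1 (g s.1 * s.2)) := by
  unfold phiStep
  split
  · rename_i h
    rw [h, map_one]
    simp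
  · simp

lemma piProd_phiStep (g : ∀ i, G i) (s : Σ i, G i) :
    piProd G' (phiStep f g s) =
      Pi.mulSingle s.1 ((f s.1 (g s.1))⁻¹ * f s.1 (g s.1 * s.2)) := by
  unfold phiStep
  split
  · rename_i h
    rw [h]
    simp [piProd]
  · simp [piProd]

/-- The "image of the prefix" function. -/
def lam (f : ∀ i, G i → G' i) (x : ∀ i, G i) : ∀ i, G' i := fun i => f i (x i)

lemma lam_one (hf : ∀ i, f i 1 = 1) : lam f 1 = 1 := funext fun i => hf i

lemma mulSingle_step (x : ∀ i, G i) (s : Σ i, G i) :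
    Pi.mulSingle s.1 ((f s.1 (x s.1))⁻¹ * f s.1 (x s.1 * s.2)) =
      (lam f x)⁻¹ * lam f (x * Pi.mulSingle s.1 s.2) := by
  funext j
  rcases eq_or_ne j s.1 with h | h
  · subst h
    simp [lam]
  · simp [lam, Pi.mulSingle_eq_of_ne h, Pi.mulSingle_eq_of_ne (Ne.symm h)]

lemma piProd_phiAux (x : ∀ i, G i) (w : List (Σ i, G i)) :
    piProd G' (phiAux f x w) = (lam f x)⁻¹ * lam f (x * piProd G w) := by
  induction w generalizing x with
  | nil => simp [phiAux_nil]
  | cons s w ih =>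
    rw [phiAux_cons, piProd_append, piProd_phiStep, mulSingle_step, ih, piProd_cons,
      ← mul_assoc x]
    group

lemma theta_wordProd {T : Type*} [Group T] (e : ∀ i, G' i →* T)
    (hcomm : ∀ ⦃i j : ι⦄, Γ.Adj i j → ∀ (a : G' i) (b : G' j), Commute (e i a) (e j b))
    (w : List (Σ i, G i)) :
    theta Γ T e f hcomm (wordProd Γ G w) =
      ⟨piProd G w, fun x => ((phiAux f x w).map fun t => e t.1 t.2).prod⟩ := by
  induction w with
  | nil =>
    rw [wordProd_nil, map_one]
    refine Wr.ext (by simp) (fun x => ?_)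
    simp [phiAux_nil]
  | cons s w ih =>
    rw [wordProd_cons, map_mul, theta_of, ih]
    refine Wr.ext ?_ (fun x => ?_)
    · simp [thetaVertex, piProd_cons]
    · simp only [thetaVertex, MonoidHom.coe_mk, OneHom.coe_mk, phiAux_cons, List.map_append,
        List.prod_append, eprod_phiStep, Wr.mul_snd]

end PhiLemmas

section MainAux

variable [DecidableEq ι] (Γ : SimpleGraph ι) (f : ∀ i, G i → G' i)

/-- The induced map on graph products. -/
noncomputable def PhiFun : GP Γ G → GP Γ G' := fun z =>
  (theta Γ (GP Γ G') (of Γ G') f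
    (fun _ _ hadj a b => of_adj_commute Γ hadj a b) z).snd 1

lemma PhiFun_wordProd (w : List (Σ i, G i)) :
    PhiFun Γ f (wordProd Γ G w) = wordProd Γ G' (phiAux f 1 w) := by
  unfold PhiFun
  rw [theta_wordProd]
  rfl

lemma theta_fst (z : GP Γ G) :
    (theta Γ (GP Γ G') (of Γ G') f
      (fun _ _ hadj a b => of_adj_commute Γ hadj a b) z).fst = proj Γ G z := by
  obtain ⟨w, rfl⟩ := exists_word Γ z
  rw [theta_wordProd, proj_wordProd]

lemma PhiFun_mul (z₁ z₂ : GP Γ G) (h₁ : proj Γ G z₁ = 1) :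
    PhiFun Γ f (z₁ * z₂) = PhiFun Γ f z₁ * PhiFun Γ f z₂ := by
  unfold PhiFun
  rw [map_mul, Wr.mul_snd, theta_fst, h₁, one_mul]

lemma proj_PhiFun (hf : ∀ i, f i 1 = 1) (z : GP Γ G) (hz : proj Γ G z = 1) :
    proj Γ G' (PhiFun Γ f z) = 1 := by
  obtain ⟨w, rfl⟩ := exists_word Γ z
  rw [proj_wordProd] at hz
  have h1 : lam f 1 = 1 := lam_one f hf
  rw [PhiFun_wordProd, proj_wordProd, piProd_phiAux, hz, h1]
  simp [h1]

lemma nl_le (z : GP Γ G) (w : List (Σ i, G i)) (hw : wordProd Γ G w = z) :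
    nl Γ G z ≤ w.length :=
  Nat.sInf_le ⟨w, hw, rfl⟩

lemma exists_min_word (z : GP Γ G) :
    ∃ w : List (Σ i, G i), wordProd Γ G w = z ∧ w.length = nl Γ G z := by
  have h : {n | ∃ w : List (Σ i, G i), wordProd Γ G w = z ∧ w.length = n}.Nonempty := by
    obtain ⟨w, hw⟩ := exists_word Γ z
    exact ⟨w.length, w, hw, rfl⟩
  exact Nat.sInf_mem h

lemma nl_PhiFun_le (z : GP Γ G) : nl Γ G' (PhiFun Γ f z) ≤ nl Γ G z := by
  obtain ⟨w, hw, hlen⟩ := exists_min_word Γ z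
  have h1 : PhiFun Γ f z = wordProd Γ G' (phiAux f 1 w) := by rw [← hw, PhiFun_wordProd]
  rw [h1, ← hlen]
  exact (nl_le Γ _ _ rfl).trans (phiAux_length_le f 1 w)

lemma lam_mul_piProd_phiStep (x : ∀ i, G i) (s : Σ i, G i) :
    lam f x * piProd G' (phiStep f x s) = lam f (x * Pi.mulSingle s.1 s.2) := by
  rw [piProd_phiStep, mulSingle_step, mul_inv_cancel_left]

lemma psi_phiStep (hinj : ∀ i, Function.Injective (f i)) (x : ∀ i, G i) (s : Σ i, G i) :
    wordProd Γ G (phiAux (fun i => Function.invFun (f i)) (lam f x) (phiStep f x s)) =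
      of Γ G s.1 s.2 := by
  unfold phiStep
  split
  · rename_i h
    have h2 : f s.1 (x s.1) = f s.1 (x s.1 * s.2) := inv_mul_eq_one.mp h
    have h2' : x s.1 = x s.1 * s.2 := hinj s.1 h2
    have h3 : s.2 = 1 := mul_left_cancel (a := x s.1) (by rw [mul_one, ← h2'])
    rw [phiAux_nil, wordProd_nil, h3, map_one]
  · rename_i h
    rw [phiAux_cons, phiAux_nil, List.append_nil]
    unfold phiStep
    have e1 : lam f x s.1 = f s.1 (x s.1) := rfl
    have e2 : lam f x s.1 * ((f s.1 (x s.1))⁻¹ * f s.1 (x s.1 * s.2)) =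
        f s.1 (x s.1 * s.2) := by rw [e1, mul_inv_cancel_left]
    have e3 : Function.invFun (f s.1) (f s.1 (x s.1)) = x s.1 :=
      Function.leftInverse_invFun (hinj s.1) _
    have e4 : Function.invFun (f s.1) (f s.1 (x s.1 * s.2)) = x s.1 * s.2 :=
      Function.leftInverse_invFun (hinj s.1) _
    have e5 : (Function.invFun (f s.1) (lam f x s.1))⁻¹ *
        Function.invFun (f s.1) (lam f x s.1 * ((f s.1 (x s.1))⁻¹ * f s.1 (x s.1 * s.2))) =
        s.2 := by
      rw [e2, e1, e3, e4, inv_mul_cancel_left]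
    have hs2 : s.2 ≠ 1 := by
      intro hs
      apply h
      rw [hs, mul_one]
      simp
    rw [if_neg (by rw [e5]; exact hs2)]
    simp only [e5]
    simp [wordProd]

lemma psi_phi_word (hinj : ∀ i, Function.Injective (f i)) (x : ∀ i, G i) (w : List (Σ i, G i)) :
    wordProd Γ G (phiAux (fun i => Function.invFun (f i)) (lam f x) (phiAux f x w)) =
      wordProd Γ G w := by
  induction w generalizing x with
  | nil => simp [phiAux_nil]
  | cons s w ih =>
    rw [phiAux_cons, phiAux_append, wordProd_append, psi_phiStep Γ f hinj,
      lam_mul_piProd_phiStep, ih, wordProd_cons]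

lemma PhiFun_one : PhiFun Γ f 1 = 1 := by
  unfold PhiFun
  rw [map_one]
  rfl

lemma PhiFun_inv (z : GP Γ G) (hz : proj Γ G z = 1) :
    PhiFun Γ f z⁻¹ = (PhiFun Γ f z)⁻¹ := by
  have h := PhiFun_mul Γ f z⁻¹ z (by rw [map_inv, hz, inv_one])
  rw [inv_mul_cancel, PhiFun_one] at h
  exact eq_inv_of_mul_eq_one_left h.symm

lemma psi_phiFun (hinj : ∀ i, Function.Injective (f i)) (hf : ∀ i, f i 1 = 1) (z : GP Γ G) :
    PhiFun Γ (fun i => Function.invFun (f i)) (PhiFun Γ f z) = z := by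
  obtain ⟨w, rfl⟩ := exists_word Γ z
  rw [PhiFun_wordProd, PhiFun_wordProd, ← lam_one f hf, psi_phi_word Γ f hinj]

lemma nl_PhiFun_eq (hinj : ∀ i, Function.Injective (f i)) (hf : ∀ i, f i 1 = 1) (z : GP Γ G) :
    nl Γ G' (PhiFun Γ f z) = nl Γ G z := by
  refine le_antisymm (nl_PhiFun_le Γ f z) ?_
  conv_lhs => rw [← psi_phiFun Γ f hinj hf z]
  exact nl_PhiFun_le Γ _ _

end MainAux
end Stmt9Aux

/-- For injective identity-preserving set maps `f i`, the induced
homomorphism `Φ_Γ : K_Γ → K'_Γ` is an isometric embedding for the normal length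
metrics `d_nl(g,h) = nl(g⁻¹h)`. -/
theorem stmt9 {ι : Type*} [DecidableEq ι] [Fintype ι] (Γ : SimpleGraph ι)
    (G G' : ι → Type*) [∀ i, Group (G i)] [∀ i, Group (G' i)]
    (f : ∀ i, G i → G' i) (hinj : ∀ i, Function.Injective (f i)) (hf : ∀ i, f i 1 = 1) :
    ∃ Φ : (proj Γ G).ker →* (proj Γ G').ker,
      (∀ (w : List (Σ i, G i)) (hw : wordProd Γ G w ∈ (proj Γ G).ker),
          (Φ ⟨wordProd Γ G w, hw⟩ : GP Γ G') = wordProd Γ G' (phiWord f w)) ∧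
      (∀ x y : (proj Γ G).ker,
          nl Γ G' ((Φ x : GP Γ G')⁻¹ * (Φ y : GP Γ G')) =
            nl Γ G ((x : GP Γ G)⁻¹ * (y : GP Γ G))) := by
  classical
  refine ⟨MonoidHom.mk'
      (fun k => ⟨PhiFun Γ f k.1,
        MonoidHom.mem_ker.mpr (proj_PhiFun Γ f hf k.1 (MonoidHom.mem_ker.mp k.2))⟩)
      (fun a b => Subtype.ext (PhiFun_mul Γ f a.1 b.1 (MonoidHom.mem_ker.mp a.2))), ?_, ?_⟩
  · intro w hw
    show PhiFun Γ f (wordProd Γ G w) = _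
    rw [PhiFun_wordProd]
    rfl
  · intro x y
    have hx : proj Γ G (x : GP Γ G) = 1 := MonoidHom.mem_ker.mp x.2
    have h2 : PhiFun Γ f ((x : GP Γ G)⁻¹ * (y : GP Γ G)) =
        (PhiFun Γ f (x : GP Γ G))⁻¹ * PhiFun Γ f (y : GP Γ G) := by
      rw [PhiFun_mul Γ f _ _ (by rw [map_inv, hx, inv_one]), PhiFun_inv Γ f _ hx]
    show nl Γ G' ((PhiFun Γ f (x : GP Γ G))⁻¹ * PhiFun Γ f (y : GP Γ G)) = _
    rw [← h2, nl_PhiFun_eq Γ f hinj hf]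

end GPaper
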